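/- Let n be an odd prime and let A = (a_{i,j}) be the n×n matrix over Z_{2n²+2n} defined by a_{i,j} = i + (n+1)(j−1) when i ≡ j (mod 2) and a_{i,j} = n² + n − i − (n+1)(j−1) when i ≢ j (mod 2). Then for every j ∈ [1,n] the additive order in Z_{2n(n+1)} of the sum of the entries of column j is 4 if j = (n+1)/2 and is 4n otherwise; and for every i ∈ [1,n] the additive order in Z_{2n(n+1)} of the sum of the entries of row i is 4 if i = (n+1)/2 and is a multiple of n otherwise. (This is the key computational claim underlying the paper's biembedding of K_{(n+1)×2n} whose faces have length 4n or a multiple of n².) -/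
import Mathlib

private lemma sum_if_odd (c P Q : ℤ) : ∀ k : ℕ,
    (∑ i ∈ Finset.Icc 1 (2 * k + 1),
      (if i % 2 = 1 then P + c * (i : ℤ) else Q - c * (i : ℤ))) = P + c + k * (P + Q + c)
  | 0 => by
    rw [show 2 * 0 + 1 = 1 by norm_num, Finset.Icc_self, Finset.sum_singleton,
      if_pos (by norm_num)]
    push_cast; ring
  | k + 1 => by
    rw [show 2 * (k + 1) + 1 = (2 * k + 1 + 1) + 1 by ring,
      Finset.sum_Icc_succ_top (by omega), Finset.sum_Icc_succ_top (by omega),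
      sum_if_odd c P Q k, if_neg (by omega : ¬ (2 * k + 1 + 1) % 2 = 1),
      if_pos (by omega : (2 * k + 1 + 1 + 1) % 2 = 1)]
    push_cast; ring

private lemma sum_if_even (c P Q : ℤ) : ∀ k : ℕ,
    (∑ i ∈ Finset.Icc 1 (2 * k + 1),
      (if i % 2 = 0 then P + c * (i : ℤ) else Q - c * (i : ℤ))) = Q - c + k * (P + Q - c)
  | 0 => by
    rw [show 2 * 0 + 1 = 1 by norm_num, Finset.Icc_self, Finset.sum_singleton,
      if_neg (by norm_num)]
    push_cast; ring
  | k + 1 => by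
    rw [show 2 * (k + 1) + 1 = (2 * k + 1 + 1) + 1 by ring,
      Finset.sum_Icc_succ_top (by omega), Finset.sum_Icc_succ_top (by omega),
      sum_if_even c P Q k, if_pos (by omega : (2 * k + 1 + 1) % 2 = 0),
      if_neg (by omega : ¬ (2 * k + 1 + 1 + 1) % 2 = 0)]
    push_cast; ring

private lemma castZ {V : ℕ} (T : ℤ) (u w : ℕ) (h : T = u + w * V) :
    ((T : ℤ) : ZMod V) = (u : ZMod V) := by
  subst h; push_cast; simp [ZMod.natCast_self]

private lemma ord_eq {V : ℕ} (hV : V ≠ 0) (c a b : ℕ) (hVe : V = c * b)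
    (hg : Nat.gcd b a = 1) (hc : 0 < c) :
    addOrderOf (((c * a : ℕ) : ZMod V)) = b := by
  rw [ZMod.addOrderOf_coe _ hV, hVe, Nat.gcd_mul_left, hg, mul_one]
  exact Nat.mul_div_cancel_left b hc

private lemma ord_dvd {V : ℕ} (hV : V ≠ 0) (n c u : ℕ) (hVe : V = n * c)
    (hp : n.Prime) (hnu : ¬ n ∣ u) :
    n ∣ addOrderOf ((u : ZMod V)) := by
  rw [ZMod.addOrderOf_coe _ hV]
  have hgu : Nat.gcd V u ∣ u := Nat.gcd_dvd_right V u
  have hcop : Nat.Coprime (Nat.gcd V u) n :=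
    Nat.Coprime.symm ((hp.coprime_iff_not_dvd).mpr fun h => hnu (h.trans hgu))
  set g := Nat.gcd V u with hgdef
  have h1 : g ∣ c * n := by rw [mul_comm, ← hVe]; exact Nat.gcd_dvd_left V u
  obtain ⟨t, ht⟩ := Nat.Coprime.dvd_of_dvd_mul_right hcop h1
  have hgpos : 0 < g :=
    Nat.pos_of_ne_zero (fun h => hV (Nat.eq_zero_of_gcd_eq_zero_left h))
  refine ⟨t, ?_⟩
  rw [hVe, ht, show n * (g * t) = g * (n * t) by ring,
    Nat.mul_div_cancel_left _ hgpos]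

private lemma not_dvd_int (n : ℕ) (b : ℤ) (h0 : b ≠ 0) (h2 : |b| < n) : ¬ (n : ℤ) ∣ b :=
  fun h => h0 (Int.eq_zero_of_abs_lt_dvd h h2)

private def Fk (k : ℕ) (i j : ℕ) : ℤ :=
  if i % 2 = j % 2 then ((i : ℤ) + (((2 * k + 1 : ℕ) : ℤ) + 1) * ((j : ℤ) - 1))
  else (((2 * k + 1 : ℕ) : ℤ) ^ 2 + ((2 * k + 1 : ℕ) : ℤ) - (i : ℤ)
    - (((2 * k + 1 : ℕ) : ℤ) + 1) * ((j : ℤ) - 1))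

private lemma col_sum_odd (k j : ℕ) (hj2 : j % 2 = 1) :
    (∑ i ∈ Finset.Icc 1 (2 * k + 1), Fk k i j)
      = (((2 * k + 1 : ℕ) : ℤ) + 1) * ((j : ℤ) - 1) + 1
        + k * (((2 * k + 1 : ℕ) : ℤ) ^ 2 + ((2 * k + 1 : ℕ) : ℤ) + 1) := by
  refine Eq.trans (Finset.sum_congr rfl fun i _ => ?_)
    (Eq.trans (sum_if_odd 1 ((((2 * k + 1 : ℕ) : ℤ) + 1) * ((j : ℤ) - 1))
      (((2 * k + 1 : ℕ) : ℤ) ^ 2 + ((2 * k + 1 : ℕ) : ℤ)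
        - (((2 * k + 1 : ℕ) : ℤ) + 1) * ((j : ℤ) - 1)) k) (by ring))
  simp only [Fk]; rw [hj2]
  split_ifs <;> first | ring1 | (exfalso; omega)

private lemma col_sum_even (k j : ℕ) (hj2 : j % 2 = 0) :
    (∑ i ∈ Finset.Icc 1 (2 * k + 1), Fk k i j)
      = ((2 * k + 1 : ℕ) : ℤ) ^ 2 + ((2 * k + 1 : ℕ) : ℤ)
        - (((2 * k + 1 : ℕ) : ℤ) + 1) * ((j : ℤ) - 1) - 1
        + k * (((2 * k + 1 : ℕ) : ℤ) ^ 2 + ((2 * k + 1 : ℕ) : ℤ) - 1) := by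
  refine Eq.trans (Finset.sum_congr rfl fun i _ => ?_)
    (Eq.trans (sum_if_even 1 ((((2 * k + 1 : ℕ) : ℤ) + 1) * ((j : ℤ) - 1))
      (((2 * k + 1 : ℕ) : ℤ) ^ 2 + ((2 * k + 1 : ℕ) : ℤ)
        - (((2 * k + 1 : ℕ) : ℤ) + 1) * ((j : ℤ) - 1)) k) (by ring))
  simp only [Fk]; rw [hj2]
  split_ifs <;> first | ring1 | (exfalso; omega)

private lemma row_sum_odd (k i : ℕ) (hi2 : i % 2 = 1) :
    (∑ j ∈ Finset.Icc 1 (2 * k + 1), Fk k i j)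
      = (i : ℤ) + k * (((2 * k + 1 : ℕ) : ℤ) + 1) ^ 2 := by
  refine Eq.trans (Finset.sum_congr rfl fun j _ => ?_)
    (Eq.trans (sum_if_odd (((2 * k + 1 : ℕ) : ℤ) + 1)
      ((i : ℤ) - (((2 * k + 1 : ℕ) : ℤ) + 1))
      (((2 * k + 1 : ℕ) : ℤ) ^ 2 + ((2 * k + 1 : ℕ) : ℤ) - (i : ℤ)
        + (((2 * k + 1 : ℕ) : ℤ) + 1)) k) (by ring))
  simp only [Fk]; rw [hi2]
  split_ifs <;> first | ring1 | (exfalso; omega)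

private lemma row_sum_even (k i : ℕ) (hi2 : i % 2 = 0) :
    (∑ j ∈ Finset.Icc 1 (2 * k + 1), Fk k i j)
      = ((2 * k + 1 : ℕ) : ℤ) ^ 2 + ((2 * k + 1 : ℕ) : ℤ) - (i : ℤ)
        + k * (((2 * k + 1 : ℕ) : ℤ) ^ 2 - 1) := by
  refine Eq.trans (Finset.sum_congr rfl fun j _ => ?_)
    (Eq.trans (sum_if_even (((2 * k + 1 : ℕ) : ℤ) + 1)
      ((i : ℤ) - (((2 * k + 1 : ℕ) : ℤ) + 1))
      (((2 * k + 1 : ℕ) : ℤ) ^ 2 + ((2 * k + 1 : ℕ) : ℤ) - (i : ℤ)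
        + (((2 * k + 1 : ℕ) : ℤ) + 1)) k) (by ring))
  simp only [Fk]; rw [hi2]
  split_ifs <;> first | ring1 | (exfalso; omega)

/-- Proposition 5.9 (key computation): for the matrix of the globally simple
NH_{2n}(n;n) over Z_{2n(n+1)}, n an odd prime, the additive order of the sum of
column j is 4 if j = (n+1)/2 and 4n otherwise, and the additive order of the sum of
row i is 4 if i = (n+1)/2 and a multiple of n otherwise. -/
theorem stmt16 (n : ℕ) (hp : n.Prime) (hodd : Odd n)
    (A : ℕ → ℕ → ZMod (2 * n ^ 2 + 2 * n))
    (hA : ∀ i ∈ Finset.Icc 1 n, ∀ j ∈ Finset.Icc 1 n,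
      (i % 2 = j % 2 →
        A i j = (((i : ℤ) + ((n : ℤ) + 1) * ((j : ℤ) - 1) : ℤ) : ZMod (2 * n ^ 2 + 2 * n))) ∧
      (i % 2 ≠ j % 2 →
        A i j = (((n : ℤ) ^ 2 + n - i - ((n : ℤ) + 1) * ((j : ℤ) - 1) : ℤ)
          : ZMod (2 * n ^ 2 + 2 * n)))) :
    (∀ j ∈ Finset.Icc 1 n,
      (j = (n + 1) / 2 → addOrderOf (∑ i ∈ Finset.Icc 1 n, A i j) = 4) ∧
      (j ≠ (n + 1) / 2 → addOrderOf (∑ i ∈ Finset.Icc 1 n, A i j) = 4 * n)) ∧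
    (∀ i ∈ Finset.Icc 1 n,
      (i = (n + 1) / 2 → addOrderOf (∑ j ∈ Finset.Icc 1 n, A i j) = 4) ∧
      (i ≠ (n + 1) / 2 → n ∣ addOrderOf (∑ j ∈ Finset.Icc 1 n, A i j))) := by
  obtain ⟨k, hk⟩ := hodd
  subst hk
  have hk1 : 1 ≤ k := by
    rcases Nat.eq_zero_or_pos k with rfl | h
    · norm_num at hp
    · exact h
  have hV0 : 2 * (2 * k + 1) ^ 2 + 2 * (2 * k + 1) ≠ 0 := by positivity
  have hm : (2 * k + 1 + 1) / 2 = k + 1 := by omega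
  have hgco : ∀ a : ℕ, a % 2 = 1 → ¬ (2 * k + 1) ∣ a → Nat.gcd (4 * (2 * k + 1)) a = 1 := by
    intro a ha hnda
    have h2 : Nat.Coprime 2 a := (Nat.prime_two.coprime_iff_not_dvd).mpr (by omega)
    have h4 : Nat.Coprime 4 a := by
      rw [show (4 : ℕ) = 2 ^ 2 by norm_num]
      exact Nat.Coprime.pow_left 2 h2
    exact Nat.Coprime.mul h4 ((hp.coprime_iff_not_dvd).mpr hnda)
  constructor
  · -- columns
    intro j hj
    have hjb := Finset.mem_Icc.mp hj
    have colkey : (∑ i ∈ Finset.Icc 1 (2 * k + 1), A i j)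
        = (((∑ i ∈ Finset.Icc 1 (2 * k + 1), Fk k i j) : ℤ)
            : ZMod (2 * (2 * k + 1) ^ 2 + 2 * (2 * k + 1))) := by
      rw [Int.cast_sum]
      refine Finset.sum_congr rfl fun i hi => ?_
      by_cases h : i % 2 = j % 2
      · rw [(hA i hi j hj).1 h]; simp only [Fk]; rw [if_pos h]
      · rw [(hA i hi j hj).2 h]; simp only [Fk]; rw [if_neg h]
    constructor
    · intro hjm
      rw [hm] at hjm; subst hjm
      rw [colkey]
      rcases Nat.even_or_odd k with ⟨s, hs⟩ | ⟨s, hs⟩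
      · rw [col_sum_odd k (k + 1) (by omega),
          castZ _ ((2 * k + 1) * (k + 1) * 1) s (by push_cast [hs]; ring)]
        exact ord_eq hV0 ((2 * k + 1) * (k + 1)) 1 4 (by ring) (by norm_num) (by positivity)
      · rw [col_sum_even k (k + 1) (by omega),
          castZ _ ((2 * k + 1) * (k + 1) * 3) s (by push_cast [hs]; ring)]
        exact ord_eq hV0 ((2 * k + 1) * (k + 1)) 3 4 (by ring) (by norm_num) (by positivity)
    · intro hjm
      rw [hm] at hjm
      have hbm : ¬ ((2 * k + 1 : ℕ) : ℤ) ∣ (2 * (j : ℤ) - 1 - (2 * (k : ℤ) + 1)) :=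
        not_dvd_int _ _ (by omega) (by rw [abs_lt]; constructor <;> omega)
      rcases Nat.mod_two_eq_zero_or_one j with hj2 | hj2
      · -- j even
        rcases Nat.even_or_odd k with ⟨s, hs⟩ | ⟨s, hs⟩
        · have hnd : ¬ (2 * k + 1) ∣ (4 * k + 3 - 2 * j) := by
            intro hd
            have hdz := Int.natCast_dvd_natCast.mpr hd
            refine hbm ?_
            have hEq : 2 * (j : ℤ) - 1 - (2 * (k : ℤ) + 1)
                = ((2 * k + 1 : ℕ) : ℤ) - ((4 * k + 3 - 2 * j : ℕ) : ℤ) := by omega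
            rw [hEq]; exact dvd_sub dvd_rfl hdz
          rw [colkey, col_sum_even k j hj2,
            castZ _ ((k + 1) * (4 * k + 3 - 2 * j)) s
              (by have hle2 : 2 * j ≤ 4 * k + 3 := by omega
                  subst hs; push_cast [Nat.cast_sub hle2]; ring)]
          exact ord_eq hV0 (k + 1) (4 * k + 3 - 2 * j) (4 * (2 * k + 1)) (by ring)
            (hgco _ (by omega) hnd) (by positivity)
        · have hnd : ¬ (2 * k + 1) ∣ (8 * k + 5 - 2 * j) := by
            intro hd
            have hdz := Int.natCast_dvd_natCast.mpr hd
            refine hbm ?_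
            have hEq : 2 * (j : ℤ) - 1 - (2 * (k : ℤ) + 1)
                = ((2 * k + 1 : ℕ) : ℤ) * 3 - ((8 * k + 5 - 2 * j : ℕ) : ℤ) := by omega
            rw [hEq]; exact dvd_sub (dvd_mul_right _ _) hdz
          rw [colkey, col_sum_even k j hj2,
            castZ _ ((k + 1) * (8 * k + 5 - 2 * j)) s
              (by have hle2 : 2 * j ≤ 8 * k + 5 := by omega
                  subst hs; push_cast [Nat.cast_sub hle2]; ring)]
          exact ord_eq hV0 (k + 1) (8 * k + 5 - 2 * j) (4 * (2 * k + 1)) (by ring)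
            (hgco _ (by omega) hnd) (by positivity)
      · -- j odd
        rcases Nat.even_or_odd k with ⟨s, hs⟩ | ⟨s, hs⟩
        · have hnd : ¬ (2 * k + 1) ∣ (2 * j - 1) := by
            intro hd
            have hdz := Int.natCast_dvd_natCast.mpr hd
            refine hbm ?_
            have hEq : 2 * (j : ℤ) - 1 - (2 * (k : ℤ) + 1)
                = ((2 * j - 1 : ℕ) : ℤ) - ((2 * k + 1 : ℕ) : ℤ) := by omega
            rw [hEq]; exact dvd_sub hdz dvd_rfl
          rw [colkey, col_sum_odd k j hj2,
            castZ _ ((k + 1) * (2 * j - 1)) s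
              (by push_cast [hs, Nat.cast_sub (show 1 ≤ 2 * j by omega)]; ring)]
          exact ord_eq hV0 (k + 1) (2 * j - 1) (4 * (2 * k + 1)) (by ring)
            (hgco _ (by omega) hnd) (by positivity)
        · have hnd : ¬ (2 * k + 1) ∣ (2 * j + 4 * k + 1) := by
            intro hd
            have hdz := Int.natCast_dvd_natCast.mpr hd
            refine hbm ?_
            have hEq : 2 * (j : ℤ) - 1 - (2 * (k : ℤ) + 1)
                = ((2 * j + 4 * k + 1 : ℕ) : ℤ) - ((2 * k + 1 : ℕ) : ℤ) * 3 := by omega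
            rw [hEq]; exact dvd_sub hdz (dvd_mul_right _ _)
          rw [colkey, col_sum_odd k j hj2,
            castZ _ ((k + 1) * (2 * j + 4 * k + 1)) s (by push_cast [hs]; ring)]
          exact ord_eq hV0 (k + 1) (2 * j + 4 * k + 1) (4 * (2 * k + 1)) (by ring)
            (hgco _ (by omega) hnd) (by positivity)
  · -- rows
    intro i hi
    have hib := Finset.mem_Icc.mp hi
    have rowkey : (∑ j ∈ Finset.Icc 1 (2 * k + 1), A i j)
        = (((∑ j ∈ Finset.Icc 1 (2 * k + 1), Fk k i j) : ℤ)
            : ZMod (2 * (2 * k + 1) ^ 2 + 2 * (2 * k + 1))) := by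
      rw [Int.cast_sum]
      refine Finset.sum_congr rfl fun j hj => ?_
      by_cases h : i % 2 = j % 2
      · rw [(hA i hi j hj).1 h]; simp only [Fk]; rw [if_pos h]
      · rw [(hA i hi j hj).2 h]; simp only [Fk]; rw [if_neg h]
    constructor
    · intro him
      rw [hm] at him; subst him
      rw [rowkey]
      rcases Nat.even_or_odd k with ⟨s, hs⟩ | ⟨s, hs⟩
      · rw [row_sum_odd k (k + 1) (by omega),
          castZ _ ((2 * k + 1) * (k + 1) * 1) s (by push_cast [hs]; ring)]
        exact ord_eq hV0 ((2 * k + 1) * (k + 1)) 1 4 (by ring) (by norm_num) (by positivity)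
      · rw [row_sum_even k (k + 1) (by omega),
          castZ _ ((2 * k + 1) * (k + 1) * 3) s (by push_cast [hs]; ring)]
        exact ord_eq hV0 ((2 * k + 1) * (k + 1)) 3 4 (by ring) (by norm_num) (by positivity)
    · intro him
      rw [hm] at him
      have hbm : ¬ ((2 * k + 1 : ℕ) : ℤ) ∣ ((i : ℤ) - ((k : ℤ) + 1)) :=
        not_dvd_int _ _ (by omega) (by rw [abs_lt]; constructor <;> omega)
      rcases Nat.mod_two_eq_zero_or_one i with hi2 | hi2
      · -- i even
        rcases Nat.even_or_odd k with ⟨s, hs⟩ | ⟨s, hs⟩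
        · have hle : i ≤ 2 * (k + 1) * (k + 1) :=
            le_trans (by omega : i ≤ 2 * (k + 1) * 1) (Nat.mul_le_mul_left _ (by omega))
          have hnd : ¬ (2 * k + 1) ∣ (2 * (k + 1) * (k + 1) - i) := by
            intro hd
            have hdz := Int.natCast_dvd_natCast.mpr hd
            refine hbm ?_
            have hEq : (i : ℤ) - ((k : ℤ) + 1)
                = ((2 * k + 1 : ℕ) : ℤ) * ((k : ℤ) + 1)
                  - ((2 * (k + 1) * (k + 1) - i : ℕ) : ℤ) := by
              push_cast [Nat.cast_sub hle]; ring
            rw [hEq]; exact dvd_sub (dvd_mul_right _ _) hdz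
          rw [rowkey, row_sum_even k i hi2,
            castZ _ (2 * (k + 1) * (k + 1) - i) s
              (by subst hs; push_cast [Nat.cast_sub hle]; ring)]
          exact ord_dvd hV0 (2 * k + 1) (4 * (k + 1)) _ (by ring) hp hnd
        · have hle : i ≤ 2 * (k + 1) * (3 * k + 2) :=
            le_trans (by omega : i ≤ 2 * (k + 1) * 1) (Nat.mul_le_mul_left _ (by omega))
          have hnd : ¬ (2 * k + 1) ∣ (2 * (k + 1) * (3 * k + 2) - i) := by
            intro hd
            have hdz := Int.natCast_dvd_natCast.mpr hd
            refine hbm ?_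
            have hEq : (i : ℤ) - ((k : ℤ) + 1)
                = ((2 * k + 1 : ℕ) : ℤ) * (3 * ((k : ℤ) + 1))
                  - ((2 * (k + 1) * (3 * k + 2) - i : ℕ) : ℤ) := by
              push_cast [Nat.cast_sub hle]; ring
            rw [hEq]; exact dvd_sub (dvd_mul_right _ _) hdz
          rw [rowkey, row_sum_even k i hi2,
            castZ _ (2 * (k + 1) * (3 * k + 2) - i) s
              (by subst hs; push_cast [Nat.cast_sub hle]; ring)]
          exact ord_dvd hV0 (2 * k + 1) (4 * (k + 1)) _ (by ring) hp hnd
      · -- i odd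
        rcases Nat.even_or_odd k with ⟨s, hs⟩ | ⟨s, hs⟩
        · have hnd : ¬ (2 * k + 1) ∣ (i + 2 * k * (k + 1)) := by
            intro hd
            have hdz := Int.natCast_dvd_natCast.mpr hd
            refine hbm ?_
            have hEq : (i : ℤ) - ((k : ℤ) + 1)
                = ((i + 2 * k * (k + 1) : ℕ) : ℤ)
                  - ((2 * k + 1 : ℕ) : ℤ) * ((k : ℤ) + 1) := by push_cast; ring
            rw [hEq]; exact dvd_sub hdz (dvd_mul_right _ _)
          rw [rowkey, row_sum_odd k i hi2,
            castZ _ (i + 2 * k * (k + 1)) s (by push_cast [hs]; ring)]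
          exact ord_dvd hV0 (2 * k + 1) (4 * (k + 1)) _ (by ring) hp hnd
        · have hnd : ¬ (2 * k + 1) ∣ (i + 2 * k * (k + 1) + 2 * (2 * k + 1) * (k + 1)) := by
            intro hd
            have hdz := Int.natCast_dvd_natCast.mpr hd
            refine hbm ?_
            have hEq : (i : ℤ) - ((k : ℤ) + 1)
                = ((i + 2 * k * (k + 1) + 2 * (2 * k + 1) * (k + 1) : ℕ) : ℤ)
                  - ((2 * k + 1 : ℕ) : ℤ) * (3 * ((k : ℤ) + 1)) := by push_cast; ring
            rw [hEq]; exact dvd_sub hdz (dvd_mul_right _ _)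
          rw [rowkey, row_sum_odd k i hi2,
            castZ _ (i + 2 * k * (k + 1) + 2 * (2 * k + 1) * (k + 1)) s
              (by push_cast [hs]; ring)]
          exact ord_dvd hV0 (2 * k + 1) (4 * (k + 1)) _ (by ring) hp hnd
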